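/- [TxtPsdBc_C]_REC = [TxtGBc_C]_REC; that is, a class of recursive languages is Bc_C-learnable by a partial computable partially set-driven learner if and only if it is Bc_C-learnable by a partial computable Gold-style (full-information) learner. -/

import Mathlib

namespace InductiveInference

/-- `φ_e` : the `e`-th partial computable function, via the standard numbering
of `Nat.Partrec.Code`. -/
def phi (e : ℕ) : ℕ →. ℕ := (Denumerable.ofNat Nat.Partrec.Code e).eval

/-- `W_e` : the domain of `φ_e`. -/
def Wset (e : ℕ) : Set ℕ := (phi e).Dom

/-- `e` is a C-index: `φ_e` is total with values in `{0,1}`. -/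
def CIndex (e : ℕ) : Prop := ∀ x, phi e x = Part.some 0 ∨ phi e x = Part.some 1

/-- `C_e = {x | φ_e x = 1}`. -/
def Cset (e : ℕ) : Set ℕ := {x | phi e x = Part.some 1}

/-- A language is recursive (decidable). -/
def RecLang (L : Set ℕ) : Prop := ∃ f : ℕ → Bool, Computable f ∧ ∀ x, x ∈ L ↔ f x = true

/-- Texts: total functions `ℕ → ℕ ∪ {#}`; `none` is the pause symbol `#`. -/
abbrev Text := ℕ → Option ℕ

/-- The content of a text: its range minus the pause symbol. -/
def content (T : Text) : Set ℕ := {x | ∃ n, T n = some x}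

/-- The initial segment `T[n] = (T 0, …, T (n-1))`. -/
def initSeg (T : Text) (n : ℕ) : List (Option ℕ) := (List.range n).map T

/-- The (finite) content of the initial segment `T[n]`. -/
def fincontent (T : Text) (n : ℕ) : Finset ℕ := ((initSeg T n).filterMap id).toFinset

/-- A canonical numerical code for a finite set of naturals. -/
def setCode (D : Finset ℕ) : ℕ := Encodable.encode (D.sort (· ≤ ·))

/-- Learners: partial functions on (suitably coded) natural number inputs. -/
abbrev Learner := ℕ →. ℕ

/-- The learner is partial computable. -/
def PartComputable (h : Learner) : Prop := Nat.Partrec h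

/-- The learner is total computable. -/
def TotalComputable (h : Learner) : Prop := Nat.Partrec h ∧ ∀ x, (h x).Dom

/-- Hypothesis sequences (possibly undefined at some points). -/
abbrev HypSeq := ℕ → Part ℕ

/-- Gold-style (full-information) learning: `G(h,T)(i) = h(T[i])`. -/
def Gop (h : Learner) (T : Text) (i : ℕ) : Part ℕ :=
  h (Encodable.encode (initSeg T i))

/-- Partially set-driven learning: `Psd(h,T)(i) = h(content T[i], i)`. -/
def Psdop (h : Learner) (T : Text) (i : ℕ) : Part ℕ :=
  h (Nat.pair (setCode (fincontent T i)) i)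

/-- Set-driven learning: `Sd(h,T)(i) = h(content T[i])`. -/
def Sdop (h : Learner) (T : Text) (i : ℕ) : Part ℕ :=
  h (setCode (fincontent T i))

/-- Iterative learning: the input `none` codes the empty start sequence `ε`,
and `some (e, x)` codes the pair of previous hypothesis `e` and datum `x`. -/
def Itop (h : Learner) (T : Text) : ℕ → Part ℕ
  | 0 => h (Encodable.encode (none : Option (ℕ × Option ℕ)))
  | i + 1 => (Itop h T i).bind fun e =>
      h (Encodable.encode (some (e, T i) : Option (ℕ × Option ℕ)))

/-- Transductive learning: the learner receives the single (coded) datum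
`T i`; the output `0` codes the distinguished symbol `?`, and the output
`e + 1` codes the hypothesis `e`.  The value `?` of the hypothesis sequence
is represented by `Part.none`. -/
def Tdop (h : Learner) (T : Text) : ℕ → Part ℕ
  | 0 => Part.none
  | i + 1 => (h (Encodable.encode (T i))).bind fun v =>
      match v with
      | 0 => Tdop h T i
      | e + 1 => Part.some e

/-- `Ex_C`: syntactic convergence to a single correct C-index. -/
def ExC (p : HypSeq) (T : Text) : Prop :=
  ∃ n₀, (∀ n, n₀ ≤ n → p n = p n₀) ∧
    ∃ e, p n₀ = Part.some e ∧ CIndex e ∧ Cset e = content T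

/-- `Ex_W`: syntactic convergence to a single correct W-index. -/
def ExW (p : HypSeq) (T : Text) : Prop :=
  ∃ n₀, (∀ n, n₀ ≤ n → p n = p n₀) ∧
    ∃ e, p n₀ = Part.some e ∧ Wset e = content T

/-- `Bc_C`: semantic convergence to correct C-indices. -/
def BcC (p : HypSeq) (T : Text) : Prop :=
  ∃ n₀, ∀ n, n₀ ≤ n → ∃ e, p n = Part.some e ∧ CIndex e ∧ Cset e = content T

/-- `Bc_W`: semantic convergence to correct W-indices. -/
def BcW (p : HypSeq) (T : Text) : Prop :=
  ∃ n₀, ∀ n, n₀ ≤ n → ∃ e, p n = Part.some e ∧ Wset e = content T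

/-- `CInd`: every hypothesis output is a C-index. -/
def CIndRes (p : HypSeq) (_T : Text) : Prop :=
  ∀ i e, p i = Part.some e → CIndex e

/-- `T`: the always-true restriction. -/
def TrueRes (_p : HypSeq) (_T : Text) : Prop := True

abbrev InteractionOp := Learner → Text → HypSeq
abbrev Restriction := HypSeq → Text → Prop

/-- Conjunction of restrictions. -/
def andRes (δ δ' : Restriction) : Restriction := fun p T => δ p T ∧ δ' p T

/-- `h` `Txtβδ`-learns `L`: on every text for `L` the restriction `δ` holds. -/
def Learns (β : InteractionOp) (δ : Restriction) (h : Learner) (L : Set ℕ) : Prop :=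
  ∀ T : Text, content T = L → δ (β h T) T

/-- The restriction `α` holds for `h` on all texts whatsoever. -/
def OnAllTexts (β : InteractionOp) (α : Restriction) (h : Learner) : Prop :=
  ∀ T : Text, α (β h T) T

/-- A class of recursive languages. -/
def IsRecClass (ℒ : Set (Set ℕ)) : Prop := ∀ L ∈ ℒ, RecLang L

/-- `[𝒞Txtβδ]_REC`: classes of recursive languages learnable by some
learner from `C` under interaction operator `β` and restriction `δ`. -/
def LearnableREC (C : Learner → Prop) (β : InteractionOp) (δ : Restriction) :
    Set (Set (Set ℕ)) :=
  {ℒ | IsRecClass ℒ ∧ ∃ h, C h ∧ ∀ L ∈ ℒ, Learns β δ h L}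

/-- `[τ(α)𝒞Txtβδ]_REC`: as above, where additionally `α` must hold on
arbitrary texts. -/
def TauLearnableREC (C : Learner → Prop) (α : Restriction) (β : InteractionOp)
    (δ : Restriction) : Set (Set (Set ℕ)) :=
  {ℒ | IsRecClass ℒ ∧ ∃ h, C h ∧ OnAllTexts β α h ∧ ∀ L ∈ ℒ, Learns β δ h L}

/- ======================= Auxiliary development ======================= -/

open Nat.Partrec (Code)
open Nat.Partrec.Code

/-! ### Canonical sorting of coded finite sets -/

private def canonSort (l : List ℕ) : List ℕ :=
  (List.range (l.foldr max 0 + 1)).filter (fun x => decide (x ∈ l))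

private theorem le_foldr_max {x : ℕ} {l : List ℕ} (hx : x ∈ l) : x ≤ l.foldr max 0 := by
  induction l with
  | nil => cases hx
  | cons a l ih =>
    rcases List.mem_cons.1 hx with rfl | hx
    · exact le_max_left _ _
    · exact le_trans (ih hx) (le_max_right _ _)

private theorem mem_canonSort {x : ℕ} {l : List ℕ} : x ∈ canonSort l ↔ x ∈ l := by
  constructor
  · intro hx
    have := List.of_mem_filter hx
    simpa using this
  · intro hx
    refine List.mem_filter.2 ⟨List.mem_range.2 ?_, by simpa using hx⟩
    exact Nat.lt_succ_of_le (le_foldr_max hx)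

private theorem canonSort_eq_sort (l : List ℕ) :
    canonSort l = l.toFinset.sort (· ≤ ·) := by
  refine (fun hp s1 s2 => List.Perm.eq_of_pairwise' (r := (· ≤ · : ℕ → ℕ → Prop)) s1 s2 hp) ?_ ?_ ?_
  · apply List.perm_of_nodup_nodup_toFinset_eq
    · exact (List.nodup_range).sublist (List.filter_sublist)
    · exact Finset.sort_nodup _ _
    · ext x
      simp [mem_canonSort]
  · exact (List.pairwise_le_range).sublist (List.filter_sublist)
  · exact Finset.pairwise_sort _ _

/-- the list with the pauses removed -/
private def depause (l : List (Option ℕ)) : List ℕ :=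
  l.foldr (fun o acc => o.casesOn acc (fun y => y :: acc)) []

private theorem depause_eq (l : List (Option ℕ)) : depause l = l.filterMap id := by
  induction l with
  | nil => rfl
  | cons o l ih => cases o <;> simp [depause, List.filterMap_cons] <;> simpa [depause] using ih

/-- translation from (coded) sequences to Psd-inputs -/
private def translate (m : ℕ) : ℕ :=
  match Encodable.decode (α := List (Option ℕ)) m with
  | some l => Nat.pair (Encodable.encode (canonSort (depause l))) l.length
  | none => 0

private theorem translate_spec (T : Text) (i : ℕ) :
    translate (Encodable.encode (initSeg T i)) =
      Nat.pair (setCode (fincontent T i)) i := by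
  have hdec : Encodable.decode (α := List (Option ℕ)) (Encodable.encode (initSeg T i)) =
      some (initSeg T i) := Encodable.encodek _
  have hlen : (initSeg T i).length = i := by simp [initSeg]
  simp only [translate, hdec, hlen]
  congr 1
  rw [depause_eq, canonSort_eq_sort]
  rfl


private def memB (x : ℕ) (l : List ℕ) : Bool :=
  l.foldr (fun z acc => acc || decide (z = x)) false

private theorem memB_eq (x : ℕ) (l : List ℕ) : memB x l = decide (x ∈ l) := by
  induction l with
  | nil => simp [memB]
  | cons a l ih =>
    simp only [memB, List.foldr_cons] at ih ⊢
    rw [ih]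
    by_cases hax : x = a <;> simp [hax, List.mem_cons, eq_comm]


private theorem memB_primrec : Primrec₂ memB :=
  (Primrec.list_foldr (α := ℕ × List ℕ) (β := ℕ) (σ := Bool)
    Primrec.snd (Primrec.const false)
    (((Primrec.dom_bool₂ (· || ·)).comp
        (Primrec.snd.comp Primrec.snd)
        (Primrec.eq.comp (Primrec.fst.comp Primrec.snd)
          (Primrec.fst.comp Primrec.fst)).decide).to₂)).of_eq
    (fun _ => rfl)

private theorem foldrMax_primrec : Primrec (fun l : List ℕ => l.foldr max 0) :=
  (Primrec.list_foldr Primrec.id (Primrec.const 0)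
    ((Primrec.nat_max.comp (Primrec.fst.comp Primrec.snd)
      (Primrec.snd.comp Primrec.snd)).to₂)).of_eq (fun _ => rfl)

private theorem canonSort_primrec : Primrec canonSort := by
  have H := Primrec.list_foldr (α := List ℕ) (β := ℕ) (σ := List ℕ)
    (f := fun l => List.range (l.foldr max 0 + 1)) (g := fun _ => [])
    (h := fun l p => bif memB p.1 l then p.1 :: p.2 else p.2)
    (Primrec.list_range.comp (Primrec.succ.comp foldrMax_primrec))
    (Primrec.const [])
    ((Primrec.cond (memB_primrec.comp (Primrec.fst.comp Primrec.snd) Primrec.fst)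
      (Primrec.list_cons.comp (Primrec.fst.comp Primrec.snd)
        (Primrec.snd.comp Primrec.snd))
      (Primrec.snd.comp Primrec.snd)).to₂)
  refine H.of_eq (fun l => ?_)
  rw [canonSort, List.filter_eq_foldr]
  simp [memB_eq]

private theorem depause_primrec : Primrec depause :=
  (Primrec.list_foldr (α := List (Option ℕ)) (β := Option ℕ) (σ := List ℕ)
    Primrec.id (Primrec.const [])
    ((Primrec.option_casesOn (Primrec.fst.comp Primrec.snd)
      (Primrec.snd.comp Primrec.snd)
      (((Primrec.list_cons.comp Primrec.snd
        ((Primrec.snd.comp Primrec.snd).comp Primrec.fst)).to₂))).to₂)).of_eq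
    (fun l => rfl)

private theorem translate_primrec : Primrec translate := by
  have H := Primrec.option_casesOn (α := ℕ) (β := List (Option ℕ)) (σ := ℕ)
    (o := fun m => Encodable.decode (α := List (Option ℕ)) m)
    (f := fun _ => 0)
    (g := fun _ l => Nat.pair (Encodable.encode (canonSort (depause l))) l.length)
    Primrec.decode (Primrec.const 0)
    ((Primrec₂.natPair.comp
      (Primrec.encode.comp (canonSort_primrec.comp (depause_primrec.comp Primrec.snd)))
      (Primrec.list_length.comp Primrec.snd)).to₂)
  refine H.of_eq (fun m => ?_)
  cases hd : Encodable.decode (α := List (Option ℕ)) m <;> simp [translate, hd, -Denumerable.decode_eq_ofNat]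

/-! ### The easy direction: Psd-learnability implies G-learnability -/

theorem psd_to_g {ℒ : Set (Set ℕ)} (h : Learner) (hcomp : PartComputable h)
    (hlearn : ∀ L ∈ ℒ, Learns Psdop BcC h L) :
    ∃ g, PartComputable g ∧ ∀ L ∈ ℒ, Learns Gop BcC g L := by
  refine ⟨fun m => h (translate m), ?_, ?_⟩
  · have : Partrec (fun m => h (translate m)) :=
      (Partrec.nat_iff.2 hcomp).comp translate_primrec.to_comp
    exact Partrec.nat_iff.1 this
  · intro L hL T hT
    have hps := hlearn L hL T hT
    have : Gop (fun m => h (translate m)) T = Psdop h T := by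
      funext i
      simp [Gop, Psdop, translate_spec]
    rw [this]
    exact hps

/-! ### The hard direction: setup -/

/-- A finite sequence over `ℕ ∪ {#}`. -/
private abbrev Seq := List (Option ℕ)

/-- Application of a learner to a (finite) sequence. -/
private def Hap (h : Learner) (σ : Seq) : Part ℕ := h (Encodable.encode σ)

/-- The content of a finite sequence. -/
private def seqContent (σ : Seq) : Set ℕ := {x | some x ∈ σ}

/-- Characteristic function of a set. -/
private noncomputable def chi (L : Set ℕ) (x : ℕ) : ℕ :=
  @ite _ (x ∈ L) (Classical.propDecidable _) 1 0

private theorem chi_pos {L : Set ℕ} {x : ℕ} (hx : x ∈ L) : chi L x = 1 := by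
  simp [chi, hx]

private theorem chi_neg {L : Set ℕ} {x : ℕ} (hx : x ∉ L) : chi L x = 0 := by
  simp [chi, hx]

private theorem chi_le_one (L : Set ℕ) (x : ℕ) : chi L x ≤ 1 := by
  by_cases hx : x ∈ L
  · rw [chi_pos hx]
  · rw [chi_neg hx]; omega

private theorem chi_eq_one_iff {L : Set ℕ} {x : ℕ} : chi L x = 1 ↔ x ∈ L := by
  by_cases hx : x ∈ L
  · simp [chi_pos hx, hx]
  · simp [chi_neg hx, hx]

private theorem cindex_phi_eq_chi {c : ℕ} {L : Set ℕ} (hC : CIndex c) (hset : Cset c = L)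
    (x : ℕ) : phi c x = Part.some (chi L x) := by
  by_cases hx : x ∈ L
  · have : x ∈ Cset c := hset ▸ hx
    rw [chi_pos hx]
    exact this
  · have hne : phi c x ≠ Part.some 1 := by
      intro hc
      exact hx (hset ▸ (hc : x ∈ Cset c))
    rw [chi_neg hx]
    rcases hC x with h0 | h1
    · exact h0
    · exact absurd h1 hne

/-- `σ` is a *good* root for `h` and `L`:  every halting value that `h` produces
on an `L`-consistent extension of `σ` is correct for `L`. -/
private def Good (h : Learner) (L : Set ℕ) (σ : Seq) : Prop :=
  seqContent σ ⊆ L ∧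
  ∀ ρ : Seq, seqContent ρ ⊆ L → ∀ c v x, Hap h (σ ++ ρ) = Part.some c →
    phi c x = Part.some v → v = chi L x

/-! ### Texts obtained by prefixing a finite sequence -/

/-- The text that first plays `σ` and then follows `T`. -/
private def catText (σ : Seq) (T : Text) : Text :=
  fun i => if i < σ.length then σ.getD i none else T (i - σ.length)

private theorem initSeg_length (T : Text) (n : ℕ) : (initSeg T n).length = n := by
  simp [initSeg]

private theorem initSeg_succ (T : Text) (n : ℕ) :
    initSeg T (n + 1) = initSeg T n ++ [T n] := by
  simp [initSeg, List.range_succ]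

private theorem initSeg_catText (σ : Seq) (T : Text) (m : ℕ) :
    initSeg (catText σ T) (σ.length + m) = σ ++ initSeg T m := by
  induction m with
  | zero =>
    simp only [Nat.add_zero, initSeg, List.range_eq_range']
    apply List.ext_getElem
    · simp
    · intro i hi₁ hi₂
      simp only [List.getElem_map, List.getElem_range']
      simp only [List.length_map, List.length_range'] at hi₁
      rw [catText, if_pos (by simpa using hi₁), List.getD_eq_getElem _ _ (by simpa using hi₁)]
      simp
  | succ m ih =>
    rw [← Nat.add_assoc, initSeg_succ, ih, initSeg_succ]
    have : catText σ T (σ.length + m) = T m := by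
      rw [catText, if_neg (by omega)]
      congr 1
      omega
    rw [this, List.append_assoc]

private theorem content_catText (σ : Seq) (T : Text) :
    content (catText σ T) = seqContent σ ∪ content T := by
  ext x
  constructor
  · rintro ⟨n, hn⟩
    rw [catText] at hn
    split at hn
    · left
      next hlt =>
      rw [List.getD_eq_getElem _ _ hlt] at hn
      exact List.mem_iff_getElem.2 ⟨n, hlt, hn⟩
    · right
      exact ⟨_, hn⟩
  · rintro (hx | ⟨n, hn⟩)
    · rcases List.mem_iff_getElem.1 hx with ⟨i, hi, hg⟩
      refine ⟨i, ?_⟩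
      rw [catText, if_pos hi, List.getD_eq_getElem _ _ hi, hg]
    · refine ⟨σ.length + n, ?_⟩
      rw [catText, if_neg (by omega)]
      simpa using hn

private theorem mem_fincontent {T : Text} {n x : ℕ} :
    x ∈ fincontent T n ↔ ∃ i < n, T i = some x := by
  simp only [fincontent, List.mem_toFinset, List.mem_filterMap, id_eq, initSeg,
    List.mem_map, List.mem_range]
  constructor
  · rintro ⟨o, ⟨i, hi, rfl⟩, ho⟩
    exact ⟨i, hi, ho⟩
  · rintro ⟨i, hi, hT⟩
    exact ⟨T i, ⟨i, hi, rfl⟩, hT⟩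

private theorem fincontent_mono {T : Text} {m n : ℕ} (hmn : m ≤ n) :
    fincontent T m ⊆ fincontent T n := by
  intro x hx
  rcases mem_fincontent.1 hx with ⟨i, hi, hT⟩
  exact mem_fincontent.2 ⟨i, lt_of_lt_of_le hi hmn, hT⟩

private theorem fincontent_subset_content (T : Text) (n : ℕ) :
    (fincontent T n : Set ℕ) ⊆ content T := by
  intro x hx
  rcases mem_fincontent.1 hx with ⟨i, _, hT⟩
  exact ⟨i, hT⟩

private theorem seqContent_initSeg (T : Text) (m : ℕ) :
    seqContent (initSeg T m) = ↑(fincontent T m) := by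
  ext x
  simp only [seqContent, Set.mem_setOf_eq, Finset.coe_sort_coe, Finset.mem_coe,
    mem_fincontent, initSeg, List.mem_map, List.mem_range]

/-- all elements of a finite subset of the content appear in some finite content -/
private theorem arrival {T : Text} {S : Finset ℕ} (hS : ↑S ⊆ content T) :
    ∃ N, ∀ n, N ≤ n → ↑S ⊆ (fincontent T n : Set ℕ) := by
  classical
  induction S using Finset.induction_on with
  | empty => exact ⟨0, fun n _ => by simp⟩
  | @insert x S hx ih =>
    rcases ih (fun y hy => hS (by
      have : y ∈ S := hy
      exact_mod_cast Finset.mem_insert.2 (Or.inr this))) with ⟨N, hN⟩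
    rcases hS (by exact_mod_cast Finset.mem_insert_self x S) with ⟨i, hi⟩
    refine ⟨max N (i + 1), fun n hn y hy => ?_⟩
    rcases Finset.mem_insert.1 hy with rfl | hy
    · exact mem_fincontent.2 ⟨i, by omega, hi⟩
    · exact hN n (le_trans (le_max_left _ _) hn) hy

private theorem seqContent_append (σ ρ : Seq) :
    seqContent (σ ++ ρ) = seqContent σ ∪ seqContent ρ := by
  ext x
  simp [seqContent, List.mem_append]

/-! ### Correct hypotheses on `L`-consistent extensions along a text -/

private theorem ext_correct {h : Learner} {L : Set ℕ} {T : Text}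
    (hT : content T = L) (hG : Learns Gop BcC h L) {σ : Seq} (hσ : seqContent σ ⊆ L) :
    ∃ M, ∀ m, M ≤ m →
      ∃ c, Hap h (σ ++ initSeg T m) = Part.some c ∧ CIndex c ∧ Cset c = L := by
  have hcat : content (catText σ T) = L := by
    rw [content_catText, hT]
    exact Set.union_eq_self_of_subset_left hσ
  rcases hG (catText σ T) hcat with ⟨n₀, hc⟩
  refine ⟨n₀, fun m hm => ?_⟩
  rcases hc (σ.length + m) (by omega) with ⟨e, he, hCi, hCs⟩
  refine ⟨e, ?_, hCi, hCs.trans hcat⟩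
  rw [Gop, initSeg_catText] at he
  exact he

/-- The diagonal sequence of finite sequences used in `exists_good`. -/
private noncomputable def diagSeq (T : Text) (R : Seq → Seq) : ℕ → Seq
  | 0 => []
  | k + 1 => (diagSeq T R k ++ [T k]) ++ R (diagSeq T R k ++ [T k])

/-! ### Existence of a good root -/

private theorem exists_good {h : Learner} {L : Set ℕ} {T : Text}
    (hT : content T = L) (hG : Learns Gop BcC h L) : ∃ σ : Seq, Good h L σ := by
  by_contra hbad
  push_neg at hbad
  have hbad' : ∀ σ : Seq, seqContent σ ⊆ L → ∃ ρ : Seq, seqContent ρ ⊆ L ∧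
      ∃ c v x, Hap h (σ ++ ρ) = Part.some c ∧ phi c x = Part.some v ∧ v ≠ chi L x := by
    intro σ hσ
    have := hbad σ
    rw [Good] at this
    push_neg at this
    rcases this hσ with ⟨ρ, hρ, c, v, x, h1, h2, h3⟩
    exact ⟨ρ, hρ, c, v, x, h1, h2, h3⟩
  classical
  -- the choice function for a bad extension
  set R : Seq → Seq := fun σ =>
    if hσ : seqContent σ ⊆ L then Classical.choose (hbad' σ hσ) else [] with hR
  -- the diagonal sequence of finite sequences
  set σseq : ℕ → Seq := diagSeq T R with hσseq
  have hσ0 : σseq 0 = [] := rfl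
  have hσs : ∀ k, σseq (k + 1) = (σseq k ++ [T k]) ++ R (σseq k ++ [T k]) := fun k => rfl
  have hTk : ∀ k, seqContent [T k] ⊆ L := by
    intro k x hx
    rcases hx with hx
    have : T k = some x := by
      rcases List.mem_singleton.1 hx with h
      exact h.symm
    exact hT ▸ ⟨k, this⟩
  have hsub : ∀ k, seqContent (σseq k) ⊆ L := by
    intro k
    induction k with
    | zero => rw [hσ0]; intro x hx; cases hx
    | succ k ih =>
      rw [hσs k, seqContent_append, seqContent_append]
      have hτ : seqContent (σseq k ++ [T k]) ⊆ L := by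
        rw [seqContent_append]
        exact Set.union_subset ih (hTk k)
      refine Set.union_subset (Set.union_subset ih (hTk k)) ?_
      rw [hR]
      simp only [dif_pos hτ]
      exact (Classical.choose_spec (hbad' _ hτ)).1
  have hpre : ∀ k, σseq k <+: σseq (k + 1) := by
    intro k
    rw [hσs k, List.append_assoc]
    exact List.prefix_append _ _
  have hchain : ∀ j k, j ≤ k → σseq j <+: σseq k := by
    intro j k hjk
    induction k with
    | zero => rw [Nat.le_zero.1 hjk]
    | succ k ih =>
      rcases Nat.lt_or_ge j (k+1) with hlt | hge
      · exact (ih (by omega)).trans (hpre k)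
      · rw [Nat.le_antisymm hjk hge]
  have hlen : ∀ k, k ≤ (σseq k).length := by
    intro k
    induction k with
    | zero => simp
    | succ k ih =>
      rw [hσs k]
      simp only [List.length_append, List.length_singleton]
      omega
  -- the diagonal text
  set T' : Text := fun i => (σseq (i + 1)).getD i none with hT'
  have hT'valid : ∀ k i, i < (σseq k).length → T' i = (σseq k).getD i none := by
    intro k i hik
    show List.getD (σseq (i + 1)) i none = List.getD (σseq k) i none
    rcases le_or_gt (i + 1) k with hle | hlt
    · rcases hchain _ _ hle with ⟨t, ht⟩
      have h2 : i + 1 ≤ (σseq (i + 1)).length := hlen (i + 1)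
      rw [← ht, List.getD_append _ _ _ _ (by omega)]
    · rcases hchain k (i + 1) (by omega) with ⟨t, ht⟩
      rw [← ht, List.getD_append _ _ _ _ hik]
  have hinit : ∀ k, initSeg T' (σseq k).length = σseq k := by
    intro k
    apply List.ext_getElem
    · simp [initSeg_length]
    · intro i hi₁ hi₂
      rw [initSeg_length] at hi₁
      simp only [initSeg, List.getElem_map, List.getElem_range]
      rw [hT'valid k i hi₁, List.getD_eq_getElem _ _ hi₁]
  have hcontent : content T' = L := by
    apply Set.eq_of_subset_of_subset
    · rintro x ⟨i, hi⟩
      have hi' : List.getD (σseq (i + 1)) i none = some x := hi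
      rcases Nat.lt_or_ge i (σseq (i + 1)).length with hlt | hge
      · rw [List.getD_eq_getElem _ _ hlt] at hi'
        exact hsub (i + 1) (List.mem_iff_getElem.2 ⟨i, hlt, hi'⟩)
      · rw [List.getD_eq_default _ _ hge] at hi'
        cases hi'
    · intro x hx
      rcases hT ▸ hx with ⟨k, hk⟩
      have hmem : some x ∈ σseq (k + 1) := by
        rw [hσs k]
        refine List.mem_append.2 (Or.inl (List.mem_append.2 (Or.inr ?_)))
        simp [← hk]
      rcases List.mem_iff_getElem.1 hmem with ⟨i, hi, hg⟩
      refine ⟨i, ?_⟩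
      rw [hT'valid (k + 1) i hi, List.getD_eq_getElem _ _ hi, hg]
  -- now derive the contradiction
  rcases hG T' hcontent with ⟨n₀, hc⟩
  set τ : Seq := σseq n₀ ++ [T n₀] with hτdef
  have hτsub : seqContent τ ⊆ L := by
    rw [hτdef, seqContent_append]
    exact Set.union_subset (hsub n₀) (hTk n₀)
  have hRspec := Classical.choose_spec (hbad' τ hτsub)
  rcases hRspec.2 with ⟨c, v, x, hHap, hphi, hne⟩
  have hRτ : R τ = Classical.choose (hbad' τ hτsub) := by
    show (if hσ : seqContent τ ⊆ L then Classical.choose (hbad' τ hσ) else []) = _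
    rw [dif_pos hτsub]
  have hτR : σseq (n₀ + 1) = τ ++ Classical.choose (hbad' τ hτsub) := by
    rw [hσs n₀, ← hτdef, hRτ]
  have h3 : n₀ + 1 ≤ (σseq (n₀ + 1)).length := hlen (n₀ + 1)
  rcases hc (σseq (n₀ + 1)).length (by omega) with ⟨e, he, hCi, hCs⟩
  rw [Gop, hinit (n₀ + 1), hτR] at he
  have hce : c = e := by
    have h1 : Part.some c = Part.some e := by
      rw [← hHap, ← he]
      rfl
    exact Part.some_inj.1 h1
  have := cindex_phi_eq_chi hCi (hCs.trans hcontent) x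
  rw [hce] at hphi
  rw [this] at hphi
  exact hne (Part.some_inj.1 hphi.symm).symm.symm

/-! ### The number-theoretic layer -/

/-- decoding of (codes of) finite sequences -/
private def seqN (a : ℕ) : Seq := Denumerable.ofNat Seq a

private theorem seqN_encode (σ : Seq) : seqN (Encodable.encode σ) = σ :=
  Denumerable.ofNat_encode σ

/-- decoding of (codes of) finite sets, as lists -/
private def listD (d : ℕ) : List ℕ := (Encodable.decode (α := List ℕ) d).getD []

private theorem listD_setCode (D : Finset ℕ) : listD (setCode D) = D.sort (· ≤ ·) := by
  rw [listD, setCode, Encodable.encodek]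
  rfl

private def allSubB (l₁ l₂ : List ℕ) : Bool :=
  l₁.foldr (fun y acc => acc && memB y l₂) true

private theorem allSubB_iff {l₁ l₂ : List ℕ} :
    allSubB l₁ l₂ = true ↔ ∀ y ∈ l₁, y ∈ l₂ := by
  induction l₁ with
  | nil => simp [allSubB]
  | cons a l ih =>
    simp only [allSubB, List.foldr_cons, Bool.and_eq_true, memB_eq, decide_eq_true_eq,
      List.mem_cons] at ih ⊢
    constructor
    · rintro ⟨h1, h2⟩ y (rfl | hy)
      · exact h2
      · exact ih.1 h1 y hy
    · intro hy
      exact ⟨ih.2 (fun y h => hy y (Or.inr h)), hy a (Or.inl rfl)⟩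

private theorem mem_depause {x : ℕ} {σ : Seq} : x ∈ depause σ ↔ some x ∈ σ := by
  rw [depause_eq]
  simp [List.mem_filterMap]

/-- `contentSubB b d` : the content of sequence number `b` is included in set number `d` -/
private def contentSubB (b d : ℕ) : Bool := allSubB (depause (seqN b)) (listD d)

private theorem contentSubB_iff {b d : ℕ} :
    contentSubB b d = true ↔ seqContent (seqN b) ⊆ {y | y ∈ listD d} := by
  rw [contentSubB, allSubB_iff]
  constructor
  · intro H y hy
    exact H y (mem_depause.2 hy)
  · intro H y hy
    exact H (mem_depause.1 hy)

/-- step-bounded application of (the code of) the learner to a pair of sequences -/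
private def cApp (ch : Code) (k a b : ℕ) : Option ℕ :=
  Nat.Partrec.Code.evaln k ch (Encodable.encode (seqN a ++ seqN b))

/-- step-bounded evaluation of hypotheses -/
private def cVal (k c x : ℕ) : Option ℕ :=
  Nat.Partrec.Code.evaln k (Denumerable.ofNat Code c) x

private theorem cApp_sound {h : Learner} {ch : Code} (heval : ch.eval = h)
    {k a b c : ℕ} (hc : cApp ch k a b = some c) :
    Hap h (seqN a ++ seqN b) = Part.some c := by
  rw [Hap, ← heval]
  exact Part.eq_some_iff.2 (Nat.Partrec.Code.evaln_sound hc)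

private theorem cApp_complete {h : Learner} {ch : Code} (heval : ch.eval = h)
    {a b c : ℕ} (hc : Hap h (seqN a ++ seqN b) = Part.some c) :
    ∃ k, cApp ch k a b = some c := by
  rw [Hap, ← heval] at hc
  exact Nat.Partrec.Code.evaln_complete.1 (Part.eq_some_iff.1 hc)

private theorem cApp_mono {ch : Code} {k k' a b c : ℕ} (hk : k ≤ k')
    (hc : cApp ch k a b = some c) : cApp ch k' a b = some c :=
  Nat.Partrec.Code.evaln_mono hk hc

private theorem cVal_sound {k c x v : ℕ} (hv : cVal k c x = some v) :
    phi c x = Part.some v :=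
  Part.eq_some_iff.2 (Nat.Partrec.Code.evaln_sound hv)

private theorem cVal_complete {c x v : ℕ} (hv : phi c x = Part.some v) :
    ∃ k, cVal k c x = some v :=
  Nat.Partrec.Code.evaln_complete.1 (Part.eq_some_iff.1 hv)

private theorem cVal_mono {k k' c x v : ℕ} (hk : k ≤ k') (hv : cVal k c x = some v) :
    cVal k' c x = some v :=
  Nat.Partrec.Code.evaln_mono hk hv

/-- the basic refutation test -/
private def testB (ch : Code) (a d t w : ℕ) : Bool :=
  let b₁ := w.unpair.1.unpair.1
  let b₂ := w.unpair.1.unpair.2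
  let x := w.unpair.2
  let u₁ := Option.bind (cApp ch t a b₁) (fun c => cVal t c x)
  let u₂ := Option.bind (cApp ch t a b₂) (fun c => cVal t c x)
  contentSubB b₁ d && (contentSubB b₂ d && (u₁.isSome && (u₂.isSome &&
    decide (u₁.getD 0 ≠ u₂.getD 0 ∨ 2 ≤ u₁.getD 0 ∨ 2 ≤ u₂.getD 0))))

/-- `testB` only discovers genuine refutation witnesses. -/
private theorem testB_sound {h : Learner} {ch : Code} (heval : ch.eval = h) {L : Set ℕ}
    {a d t w : ℕ} (hd : {y | y ∈ listD d} ⊆ L) (hGood : Good h L (seqN a))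
    (htest : testB ch a d t w = true) : False := by
  rw [testB] at htest
  simp only [Bool.and_eq_true, Option.isSome_iff_exists, decide_eq_true_eq] at htest
  obtain ⟨hb₁, hb₂, ⟨u₁, hu₁⟩, ⟨u₂, hu₂⟩, hbadv⟩ := htest
  rw [hu₁, hu₂] at hbadv
  rcases Option.bind_eq_some_iff.1 hu₁ with ⟨c₁, hc₁, hv₁⟩
  rcases Option.bind_eq_some_iff.1 hu₂ with ⟨c₂, hc₂, hv₂⟩
  have h₁ := hGood.2 _ ((contentSubB_iff.1 hb₁).trans hd) c₁ u₁ _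
    (cApp_sound heval hc₁) (cVal_sound hv₁)
  have h₂ := hGood.2 _ ((contentSubB_iff.1 hb₂).trans hd) c₂ u₂ _
    (cApp_sound heval hc₂) (cVal_sound hv₂)
  have hchi := chi_le_one L w.unpair.2
  simp only [Option.getD_some] at hbadv
  rcases hbadv with hne | hge | hge
  · exact hne (h₁.trans h₂.symm)
  · omega
  · omega

/-- introduction form for `testB` -/
private theorem testB_intro {ch : Code} {a d t : ℕ} {b₁ b₂ x c₁ c₂ v₁ v₂ : ℕ}
    (hb₁ : contentSubB b₁ d = true) (hb₂ : contentSubB b₂ d = true)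
    (hc₁ : cApp ch t a b₁ = some c₁) (hc₂ : cApp ch t a b₂ = some c₂)
    (hv₁ : cVal t c₁ x = some v₁) (hv₂ : cVal t c₂ x = some v₂)
    (hne : v₁ ≠ v₂) : testB ch a d t (Nat.pair (Nat.pair b₁ b₂) x) = true := by
  simp only [testB, Nat.unpair_pair, hc₁, hc₂, Option.bind_some, hv₁, hv₂, hb₁, hb₂,
    Option.isSome_some, Option.getD_some, Bool.true_and, Bool.and_true]
  simp [hne]

/-- the refutation predicate, searching all witnesses below `t` -/
private def badB (ch : Code) (a d t : ℕ) : Bool :=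
  (List.range (t + 1)).foldr (fun w acc => acc || testB ch a d t w) false

private theorem foldr_or_iff (p : ℕ → Bool) (l : List ℕ) (b : Bool) :
    (l.foldr (fun w acc => acc || p w) b = true) ↔ b = true ∨ ∃ w ∈ l, p w = true := by
  induction l with
  | nil => simp
  | cons a l ih =>
    simp only [List.foldr_cons, Bool.or_eq_true, ih, List.mem_cons]
    constructor
    · rintro ((hb | ⟨w, hw, hp⟩) | hp)
      · exact Or.inl hb
      · exact Or.inr ⟨w, Or.inr hw, hp⟩
      · exact Or.inr ⟨a, Or.inl rfl, hp⟩
    · rintro (hb | ⟨w, (rfl | hw), hp⟩)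
      · exact Or.inl (Or.inl hb)
      · exact Or.inr hp
      · exact Or.inl (Or.inr ⟨w, hw, hp⟩)

private theorem badB_iff {ch : Code} {a d t : ℕ} :
    badB ch a d t = true ↔ ∃ w < t + 1, testB ch a d t w = true := by
  rw [badB, foldr_or_iff]
  simp [List.mem_range]

/-- the aliveness predicate -/
private def aliveB (ch : Code) (a d t : ℕ) : Bool := contentSubB a d && !badB ch a d t

/-- the current root: the least alive candidate -/
private def tauhatN (ch : Code) (d t : ℕ) : ℕ :=
  (((List.range (t + 1)).foldr
    (fun a acc => bif aliveB ch a d t then some a else acc) none)).getD (t + 1)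

private theorem foldr_find_least (p : ℕ → Bool) (a₀ : ℕ) (hp : p a₀ = true)
    (hmin : ∀ a < a₀, p a = false) :
    ∀ n s, s ≤ a₀ → a₀ < s + n →
      (List.range' s n).foldr (fun a acc => bif p a then some a else acc) none = some a₀ := by
  intro n
  induction n with
  | zero => intro s h1 h2; omega
  | succ n ih =>
    intro s h1 h2
    have : List.range' s (n + 1) = s :: List.range' (s + 1) n := rfl
    rw [this, List.foldr_cons]
    rcases Nat.eq_or_lt_of_le h1 with rfl | hlt
    · rw [hp]
      rfl
    · rw [hmin s hlt]
      exact ih (s + 1) hlt (by omega)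

private theorem tauhatN_eq {ch : Code} {d t a₀ : ℕ} (ha : aliveB ch a₀ d t = true)
    (hmin : ∀ a < a₀, aliveB ch a d t = false) (hle : a₀ ≤ t) :
    tauhatN ch d t = a₀ := by
  rw [tauhatN, List.range_eq_range',
    foldr_find_least (fun a => aliveB ch a d t) a₀ ha hmin (t + 1) 0 (by omega) (by omega)]
  rfl

/-- the search function underlying the hypotheses of the Psd-learner -/
private def Gfun (ch : Code) (input s : ℕ) : Option ℕ :=
  bif contentSubB s.unpair.1 input.unpair.1.unpair.1 then
    Option.bind
      (cApp ch s.unpair.2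
        (tauhatN ch input.unpair.1.unpair.1 input.unpair.1.unpair.2) s.unpair.1)
      (fun c => cVal s.unpair.2 c input.unpair.2)
  else none

/-! #### Computability of the search function -/

private theorem seqN_primrec : Primrec seqN := Primrec.ofNat Seq

private theorem listD_primrec : Primrec listD :=
  Primrec.option_getD.comp (Primrec.decode (α := List ℕ)) (Primrec.const [])

private theorem allSubB_primrec : Primrec₂ allSubB :=
  (Primrec.list_foldr (α := List ℕ × List ℕ) (β := ℕ) (σ := Bool)
    Primrec.fst (Primrec.const true)
    (((Primrec.dom_bool₂ (· && ·)).comp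
        (Primrec.snd.comp Primrec.snd)
        (memB_primrec.comp (Primrec.fst.comp Primrec.snd)
          (Primrec.snd.comp Primrec.fst))).to₂)).of_eq
    (fun _ => rfl)

private theorem contentSubB_primrec : Primrec₂ contentSubB :=
  allSubB_primrec.comp (depause_primrec.comp (seqN_primrec.comp Primrec.fst))
    (listD_primrec.comp Primrec.snd)

private theorem cApp_primrec (ch : Code) :
    Primrec (fun p : ℕ × ℕ × ℕ => cApp ch p.1 p.2.1 p.2.2) :=
  Nat.Partrec.Code.primrec_evaln.comp
    (Primrec.pair (Primrec.pair Primrec.fst (Primrec.const ch))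
      (Primrec.encode.comp (Primrec.list_append.comp
        (seqN_primrec.comp (Primrec.fst.comp Primrec.snd))
        (seqN_primrec.comp (Primrec.snd.comp Primrec.snd)))))

private theorem cVal_primrec :
    Primrec (fun p : ℕ × ℕ × ℕ => cVal p.1 p.2.1 p.2.2) :=
  Nat.Partrec.Code.primrec_evaln.comp
    (Primrec.pair (Primrec.pair Primrec.fst
      ((Primrec.ofNat Code).comp (Primrec.fst.comp Primrec.snd)))
      (Primrec.snd.comp Primrec.snd))

private theorem testB_primrec (ch : Code) :
    Primrec (fun q : ((ℕ × ℕ) × ℕ) × ℕ => testB ch q.1.1.1 q.1.1.2 q.1.2 q.2) := by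
  -- components of the tuple
  have ha : Primrec (fun q : ((ℕ × ℕ) × ℕ) × ℕ => q.1.1.1) :=
    Primrec.fst.comp (Primrec.fst.comp Primrec.fst)
  have hd : Primrec (fun q : ((ℕ × ℕ) × ℕ) × ℕ => q.1.1.2) :=
    Primrec.snd.comp (Primrec.fst.comp Primrec.fst)
  have ht : Primrec (fun q : ((ℕ × ℕ) × ℕ) × ℕ => q.1.2) :=
    Primrec.snd.comp Primrec.fst
  have hw : Primrec (fun q : ((ℕ × ℕ) × ℕ) × ℕ => q.2) := Primrec.snd
  have hb₁ : Primrec (fun q : ((ℕ × ℕ) × ℕ) × ℕ => q.2.unpair.1.unpair.1) :=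
    Primrec.fst.comp (Primrec.unpair.comp (Primrec.fst.comp (Primrec.unpair.comp hw)))
  have hb₂ : Primrec (fun q : ((ℕ × ℕ) × ℕ) × ℕ => q.2.unpair.1.unpair.2) :=
    Primrec.snd.comp (Primrec.unpair.comp (Primrec.fst.comp (Primrec.unpair.comp hw)))
  have hx : Primrec (fun q : ((ℕ × ℕ) × ℕ) × ℕ => q.2.unpair.2) :=
    Primrec.snd.comp (Primrec.unpair.comp hw)
  have hu₁ : Primrec (fun q : ((ℕ × ℕ) × ℕ) × ℕ =>
      Option.bind (cApp ch q.1.2 q.1.1.1 q.2.unpair.1.unpair.1)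
        (fun c => cVal q.1.2 c q.2.unpair.2)) :=
    Primrec.option_bind ((cApp_primrec ch).comp (ht.pair (ha.pair hb₁)))
      ((cVal_primrec.comp ((ht.comp Primrec.fst).pair
        (Primrec.snd.pair (hx.comp Primrec.fst)))).to₂)
  have hu₂ : Primrec (fun q : ((ℕ × ℕ) × ℕ) × ℕ =>
      Option.bind (cApp ch q.1.2 q.1.1.1 q.2.unpair.1.unpair.2)
        (fun c => cVal q.1.2 c q.2.unpair.2)) :=
    Primrec.option_bind ((cApp_primrec ch).comp (ht.pair (ha.pair hb₂)))
      ((cVal_primrec.comp ((ht.comp Primrec.fst).pair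
        (Primrec.snd.pair (hx.comp Primrec.fst)))).to₂)
  have hcond : Primrec (fun q : ((ℕ × ℕ) × ℕ) × ℕ =>
      decide ((Option.bind (cApp ch q.1.2 q.1.1.1 q.2.unpair.1.unpair.1)
        (fun c => cVal q.1.2 c q.2.unpair.2)).getD 0 ≠
        (Option.bind (cApp ch q.1.2 q.1.1.1 q.2.unpair.1.unpair.2)
        (fun c => cVal q.1.2 c q.2.unpair.2)).getD 0 ∨
        2 ≤ (Option.bind (cApp ch q.1.2 q.1.1.1 q.2.unpair.1.unpair.1)
        (fun c => cVal q.1.2 c q.2.unpair.2)).getD 0 ∨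
        2 ≤ (Option.bind (cApp ch q.1.2 q.1.1.1 q.2.unpair.1.unpair.2)
        (fun c => cVal q.1.2 c q.2.unpair.2)).getD 0)) := by
    have g₁ : Primrec (fun q : ((ℕ × ℕ) × ℕ) × ℕ =>
        (Option.bind (cApp ch q.1.2 q.1.1.1 q.2.unpair.1.unpair.1)
          (fun c => cVal q.1.2 c q.2.unpair.2)).getD 0) :=
      Primrec.option_getD.comp hu₁ (Primrec.const 0)
    have g₂ : Primrec (fun q : ((ℕ × ℕ) × ℕ) × ℕ =>
        (Option.bind (cApp ch q.1.2 q.1.1.1 q.2.unpair.1.unpair.2)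
          (fun c => cVal q.1.2 c q.2.unpair.2)).getD 0) :=
      Primrec.option_getD.comp hu₂ (Primrec.const 0)
    apply PrimrecPred.decide
    refine PrimrecPred.or ?_ (PrimrecPred.or ?_ ?_)
    · exact PrimrecPred.not (Primrec.eq.comp g₁ g₂)
    · exact Primrec.nat_le.comp (Primrec.const 2) g₁
    · exact Primrec.nat_le.comp (Primrec.const 2) g₂
  have := (Primrec.dom_bool₂ (· && ·)).comp
    (contentSubB_primrec.comp hb₁ hd)
    ((Primrec.dom_bool₂ (· && ·)).comp
      (contentSubB_primrec.comp hb₂ hd)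
      ((Primrec.dom_bool₂ (· && ·)).comp
        (Primrec.option_isSome.comp hu₁)
        ((Primrec.dom_bool₂ (· && ·)).comp
          (Primrec.option_isSome.comp hu₂)
          hcond)))
  exact this.of_eq (fun q => rfl)

private theorem badB_primrec (ch : Code) :
    Primrec (fun p : (ℕ × ℕ) × ℕ => badB ch p.1.1 p.1.2 p.2) := by
  have := Primrec.list_foldr (α := (ℕ × ℕ) × ℕ) (β := ℕ) (σ := Bool)
    (f := fun p => List.range (p.2 + 1)) (g := fun _ => false)
    (h := fun p q => q.2 || testB ch p.1.1 p.1.2 p.2 q.1)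
    (Primrec.list_range.comp (Primrec.succ.comp Primrec.snd))
    (Primrec.const false)
    (((Primrec.dom_bool₂ (· || ·)).comp
      (Primrec.snd.comp Primrec.snd)
      ((testB_primrec ch).comp
        ((((Primrec.fst.comp (Primrec.fst.comp Primrec.fst)).pair
            (Primrec.snd.comp (Primrec.fst.comp Primrec.fst))).pair
          (Primrec.snd.comp Primrec.fst)).pair
          (Primrec.fst.comp Primrec.snd)))).to₂)
  exact this.of_eq (fun p => rfl)

private theorem aliveB_primrec (ch : Code) :
    Primrec (fun p : (ℕ × ℕ) × ℕ => aliveB ch p.1.1 p.1.2 p.2) :=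
  ((Primrec.dom_bool₂ (· && ·)).comp
    (contentSubB_primrec.comp (Primrec.fst.comp Primrec.fst)
      (Primrec.snd.comp Primrec.fst))
    ((Primrec.dom_bool not).comp (badB_primrec ch))).of_eq (fun p => rfl)

private theorem tauhatN_primrec (ch : Code) : Primrec₂ (tauhatN ch) := by
  have hfold := Primrec.list_foldr (α := ℕ × ℕ) (β := ℕ) (σ := Option ℕ)
    (f := fun p => List.range (p.2 + 1)) (g := fun _ => none)
    (h := fun p q => bif aliveB ch q.1 p.1 p.2 then some q.1 else q.2)
    (Primrec.list_range.comp (Primrec.succ.comp Primrec.snd))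
    (Primrec.const none)
    ((Primrec.cond
      ((aliveB_primrec ch).comp
        (((Primrec.fst.comp Primrec.snd).pair
          (Primrec.fst.comp Primrec.fst)).pair (Primrec.snd.comp Primrec.fst)))
      (Primrec.option_some.comp (Primrec.fst.comp Primrec.snd))
      (Primrec.snd.comp Primrec.snd)).to₂)
  exact (Primrec.option_getD.comp hfold (Primrec.succ.comp Primrec.snd)).of_eq
    (fun p => rfl)

private theorem Gfun_primrec (ch : Code) : Primrec₂ (Gfun ch) := by
  have hd : Primrec (fun p : ℕ × ℕ => p.1.unpair.1.unpair.1) :=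
    Primrec.fst.comp (Primrec.unpair.comp (Primrec.fst.comp (Primrec.unpair.comp Primrec.fst)))
  have ht : Primrec (fun p : ℕ × ℕ => p.1.unpair.1.unpair.2) :=
    Primrec.snd.comp (Primrec.unpair.comp (Primrec.fst.comp (Primrec.unpair.comp Primrec.fst)))
  have hx : Primrec (fun p : ℕ × ℕ => p.1.unpair.2) :=
    Primrec.snd.comp (Primrec.unpair.comp Primrec.fst)
  have hb : Primrec (fun p : ℕ × ℕ => p.2.unpair.1) :=
    Primrec.fst.comp (Primrec.unpair.comp Primrec.snd)
  have hk : Primrec (fun p : ℕ × ℕ => p.2.unpair.2) :=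
    Primrec.snd.comp (Primrec.unpair.comp Primrec.snd)
  have hbind : Primrec (fun p : ℕ × ℕ =>
      Option.bind (cApp ch p.2.unpair.2
        (tauhatN ch p.1.unpair.1.unpair.1 p.1.unpair.1.unpair.2) p.2.unpair.1)
        (fun c => cVal p.2.unpair.2 c p.1.unpair.2)) :=
    Primrec.option_bind
      ((cApp_primrec ch).comp (hk.pair (((tauhatN_primrec ch).comp hd ht).pair hb)))
      ((cVal_primrec.comp ((hk.comp Primrec.fst).pair
        (Primrec.snd.pair (hx.comp Primrec.fst)))).to₂)
  exact (Primrec.cond (contentSubB_primrec.comp hb hd) hbind (Primrec.const none)).to₂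

/-- the master partial function computing all hypotheses -/
private def Fmaster (ch : Code) : ℕ →. ℕ := fun input => Nat.rfindOpt (Gfun ch input)

private theorem Fmaster_partrec (ch : Code) : Nat.Partrec (Fmaster ch) :=
  Partrec.nat_iff.1 (Partrec.rfindOpt (Gfun_primrec ch).to_comp)

private theorem mem_listD_setCode {D : Finset ℕ} {y : ℕ} :
    y ∈ listD (setCode D) ↔ y ∈ D := by
  rw [listD_setCode]
  exact Finset.mem_sort _

/-! ### The hard direction: G-learnability implies Psd-learnability -/

theorem g_to_psd {ℒ : Set (Set ℕ)} (h : Learner) (hcomp : PartComputable h)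
    (hlearn : ∀ L ∈ ℒ, Learns Gop BcC h L) :
    ∃ g, PartComputable g ∧ ∀ L ∈ ℒ, Learns Psdop BcC g L := by
  classical
  obtain ⟨ch, heval⟩ := Nat.Partrec.Code.exists_code.1 hcomp
  obtain ⟨mc, hmc⟩ := Nat.Partrec.Code.exists_code.1 (Fmaster_partrec ch)
  refine ⟨fun m => Part.some (Encodable.encode (Nat.Partrec.Code.curry mc m)), ?_, ?_⟩
  · have hcp : Computable (fun m : ℕ => Encodable.encode (Nat.Partrec.Code.curry mc m)) :=
      (Primrec.encode.comp
        (Nat.Partrec.Code.primrec₂_curry.comp (Primrec.const mc) Primrec.id)).to_comp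
    exact Partrec.nat_iff.1 hcp.partrec
  · intro L hL T hT
    have hG := hlearn L hL
    -- basic facts about the coded data
    have hdmem : ∀ n y, y ∈ listD (setCode (fincontent T n)) ↔ y ∈ fincontent T n :=
      fun n y => mem_listD_setCode
    have hdL : ∀ n, {y | y ∈ listD (setCode (fincontent T n))} ⊆ L := by
      intro n y hy
      exact hT ▸ fincontent_subset_content T n ((hdmem n y).1 hy)
    -- the minimal good root
    have hPex : ∃ a, Good h L (seqN a) := by
      obtain ⟨σ, hσ⟩ := exists_good hT hG
      exact ⟨Encodable.encode σ, by rw [seqN_encode]; exact hσ⟩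
    set τ₀ := Nat.find hPex with hτ₀def
    have hτGood : Good h L (seqN τ₀) := Nat.find_spec hPex
    have hτmin : ∀ a, a < τ₀ → ¬Good h L (seqN a) := fun a ha => Nat.find_min hPex ha
    have hτsubL : seqContent (seqN τ₀) ⊆ L := hτGood.1
    -- the good root is never refuted
    have hbadτ : ∀ n t, badB ch τ₀ (setCode (fincontent T n)) t = false := by
      intro n t
      by_contra hb
      rw [Bool.not_eq_false] at hb
      rcases badB_iff.1 hb with ⟨w, _, htest⟩
      exact testB_sound heval (hdL n) hτGood htest
    -- the content of the good root eventually arrives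
    obtain ⟨Nc, hNc⟩ := arrival (T := T) (S := (depause (seqN τ₀)).toFinset) (by
      intro y hy
      have : y ∈ depause (seqN τ₀) := by
        simpa using hy
      exact hT ▸ hτsubL (mem_depause.1 this))
    have hcsτ : ∀ n, Nc ≤ n → contentSubB τ₀ (setCode (fincontent T n)) = true := by
      intro n hn
      rw [contentSubB_iff]
      intro y hy
      have hyS : y ∈ ((depause (seqN τ₀)).toFinset : Set ℕ) := by
        simp [mem_depause.2 hy]
      exact (hdmem n y).2 (hNc n hn hyS)
    -- every smaller root is eventually permanently dead
    have hdead : ∀ a, a < τ₀ →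
        ∃ Na, ∀ n, Na ≤ n → aliveB ch a (setCode (fincontent T n)) n = false := by
      intro a ha
      by_cases hsub : seqContent (seqN a) ⊆ L
      · -- the root has a genuinely wrong extension value
        have hng := hτmin a ha
        rw [Good] at hng
        push_neg at hng
        rcases hng hsub with ⟨ρ, hρ, c, v, x, hHap, hphi, hne⟩
        obtain ⟨M, hM⟩ := ext_correct hT hG (σ := seqN a) hsub
        rcases hM M le_rfl with ⟨c₂, hHap₂, hCi₂, hCs₂⟩
        have hphi₂ := cindex_phi_eq_chi hCi₂ hCs₂ x
        have h₁ : Hap h (seqN a ++ seqN (Encodable.encode ρ)) = Part.some c := by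
          rw [seqN_encode]; exact hHap
        have h₂ : Hap h (seqN a ++ seqN (Encodable.encode (initSeg T M))) = Part.some c₂ := by
          rw [seqN_encode]; exact hHap₂
        obtain ⟨k₁, hk₁⟩ := cApp_complete heval h₁
        obtain ⟨k₂, hk₂⟩ := cApp_complete heval h₂
        obtain ⟨k₃, hk₃⟩ := cVal_complete hphi
        obtain ⟨k₄, hk₄⟩ := cVal_complete hphi₂
        obtain ⟨Nar, hNar⟩ := arrival (T := T) (S := (depause ρ).toFinset) (by
          intro y hy
          have : y ∈ depause ρ := by simpa using hy
          exact hT ▸ hρ (mem_depause.1 this))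
        set W := Nat.pair (Nat.pair (Encodable.encode ρ) (Encodable.encode (initSeg T M))) x
          with hWdef
        refine ⟨max (max (max k₁ k₂) (max k₃ k₄)) (max (max Nar M) W), fun n hn => ?_⟩
        have hk₁n : k₁ ≤ n := by omega
        have hk₂n : k₂ ≤ n := by omega
        have hk₃n : k₃ ≤ n := by omega
        have hk₄n : k₄ ≤ n := by omega
        have hNarn : Nar ≤ n := by omega
        have hMn : M ≤ n := by omega
        have hWn : W ≤ n := by omega
        have htest : testB ch a (setCode (fincontent T n)) n W = true := by
          apply testB_intro (c₁ := c) (c₂ := c₂) (v₁ := v) (v₂ := chi L x)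
          · rw [contentSubB_iff]
            intro y hy
            rw [seqN_encode] at hy
            have hyS : y ∈ ((depause ρ).toFinset : Set ℕ) := by
              simp [mem_depause.2 hy]
            exact (hdmem n y).2 (hNar n hNarn hyS)
          · rw [contentSubB_iff]
            intro y hy
            rw [seqN_encode, seqContent_initSeg] at hy
            exact (hdmem n y).2 (fincontent_mono hMn hy)
          · exact cApp_mono hk₁n hk₁
          · exact cApp_mono hk₂n hk₂
          · exact cVal_mono hk₃n hk₃
          · exact cVal_mono hk₄n hk₄
          · exact hne
        have hbad : badB ch a (setCode (fincontent T n)) n = true :=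
          badB_iff.2 ⟨W, by omega, htest⟩
        rw [aliveB, hbad]
        simp
      · -- the content of the root never arrives
        refine ⟨0, fun n _ => ?_⟩
        have hcs : contentSubB a (setCode (fincontent T n)) = false := by
          by_contra hcs
          rw [Bool.not_eq_false] at hcs
          obtain ⟨y, hy, hyL⟩ := Set.not_subset.1 hsub
          have := contentSubB_iff.1 hcs hy
          exact hyL (hT ▸ fincontent_subset_content T n ((hdmem n y).1 this))
        rw [aliveB, hcs]
        rfl
    -- stabilization of the selected root
    have hstab : ∃ N₁, ∀ n, N₁ ≤ n → tauhatN ch (setCode (fincontent T n)) n = τ₀ := by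
      choose Na hNa using hdead
      refine ⟨max (max Nc τ₀) ((Finset.range τ₀).sup
        (fun a => if ha : a < τ₀ then Na a ha else 0)), fun n hn => ?_⟩
      have hNcn : Nc ≤ n := by omega
      have hτn : τ₀ ≤ n := by omega
      have hNNn : (Finset.range τ₀).sup (fun a => if ha : a < τ₀ then Na a ha else 0) ≤ n := by
        omega
      apply tauhatN_eq
      · rw [aliveB, hcsτ n hNcn, hbadτ n n]
        rfl
      · intro a ha
        have hle : (if ha' : a < τ₀ then Na a ha' else 0) ≤
            (Finset.range τ₀).sup (fun a => if ha : a < τ₀ then Na a ha else 0) :=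
          Finset.le_sup (f := fun a => if ha : a < τ₀ then Na a ha else 0)
            (Finset.mem_range.2 ha)
        rw [dif_pos ha] at hle
        exact hNa a ha n (by omega)
      · exact hτn
    obtain ⟨N₁, hN₁⟩ := hstab
    -- the everywhere-defined correct machine reachable from the good root
    obtain ⟨M₂, hM₂⟩ := ext_correct hT hG (σ := seqN τ₀) hτsubL
    rcases hM₂ M₂ le_rfl with ⟨cstar, hHs, hCis, hCss⟩
    have hHs' : Hap h (seqN τ₀ ++ seqN (Encodable.encode (initSeg T M₂))) = Part.some cstar := by
      rw [seqN_encode]; exact hHs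
    obtain ⟨kstar, hkstar⟩ := cApp_complete heval hHs'
    have hphis : ∀ x, phi cstar x = Part.some (chi L x) := cindex_phi_eq_chi hCis hCss
    have hcsb : ∀ n, M₂ ≤ n →
        contentSubB (Encodable.encode (initSeg T M₂)) (setCode (fincontent T n)) = true := by
      intro n hn
      rw [contentSubB_iff]
      intro y hy
      rw [seqN_encode, seqContent_initSeg] at hy
      exact (hdmem n y).2 (fincontent_mono hn hy)
    -- final verification
    refine ⟨max N₁ M₂, fun n hn => ?_⟩
    have hN₁n : N₁ ≤ n := by omega
    have hM₂n : M₂ ≤ n := by omega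
    have hst := hN₁ n hN₁n
    have hphi_en : ∀ x, phi (Encodable.encode (Nat.Partrec.Code.curry mc
        (Nat.pair (setCode (fincontent T n)) n))) x = Part.some (chi L x) := by
      intro x
      have heq : phi (Encodable.encode (Nat.Partrec.Code.curry mc
          (Nat.pair (setCode (fincontent T n)) n))) x =
          Nat.rfindOpt (Gfun ch (Nat.pair (Nat.pair (setCode (fincontent T n)) n) x)) := by
        show Nat.Partrec.Code.eval (Denumerable.ofNat Code _) x = _
        rw [Denumerable.ofNat_encode, Nat.Partrec.Code.eval_curry, hmc]
        rfl
      obtain ⟨kx, hkx⟩ := cVal_complete (hphis x)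
      have hwit : Gfun ch (Nat.pair (Nat.pair (setCode (fincontent T n)) n) x)
          (Nat.pair (Encodable.encode (initSeg T M₂)) (max kstar kx)) = some (chi L x) := by
        rw [Gfun]
        simp only [Nat.unpair_pair]
        rw [hcsb n hM₂n, hst, cApp_mono (le_max_left _ _) hkstar]
        simp only [cond_true, Option.bind_some]
        exact cVal_mono (le_max_right _ _) hkx
      have hdom : (Nat.rfindOpt (Gfun ch
          (Nat.pair (Nat.pair (setCode (fincontent T n)) n) x))).Dom :=
        Nat.rfindOpt_dom.2 ⟨_, _, hwit⟩
      have huniq : ∀ v, v ∈ Nat.rfindOpt (Gfun ch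
          (Nat.pair (Nat.pair (setCode (fincontent T n)) n) x)) → v = chi L x := by
        intro v hv
        obtain ⟨s, hs⟩ := Nat.rfindOpt_spec hv
        rw [Option.mem_def, Gfun] at hs
        simp only [Nat.unpair_pair] at hs
        cases hcs : contentSubB s.unpair.1 (setCode (fincontent T n)) with
        | false => rw [hcs] at hs; cases hs
        | true =>
          rw [hcs, hst] at hs
          simp only [cond_true] at hs
          rcases Option.bind_eq_some_iff.1 hs with ⟨c, hc, hval⟩
          have hHapv := cApp_sound heval hc
          have hphiv := cVal_sound hval
          exact hτGood.2 (seqN s.unpair.1)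
            ((contentSubB_iff.1 hcs).trans (hdL n)) c v x hHapv hphiv
      rw [heq]
      have hget := Part.get_mem hdom
      have hv := huniq _ hget
      exact Part.eq_some_iff.2 (hv ▸ hget)
    refine ⟨Encodable.encode (Nat.Partrec.Code.curry mc
      (Nat.pair (setCode (fincontent T n)) n)), rfl, ?_, ?_⟩
    · intro x
      by_cases hx : x ∈ L
      · right; rw [hphi_en x, chi_pos hx]
      · left; rw [hphi_en x, chi_neg hx]
    · ext x
      simp only [Cset, Set.mem_setOf_eq, hphi_en x]
      rw [hT]
      constructor
      · intro h1
        exact chi_eq_one_iff.1 (Part.some_inj.1 h1)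
      · intro hxL
        rw [chi_pos hxL]

/-- `[TxtPsdBc_C]_REC = [TxtGBc_C]_REC`. -/
theorem psd_bcC_eq_g_bcC :
    LearnableREC PartComputable Psdop BcC =
      LearnableREC PartComputable Gop BcC := by
  apply Set.eq_of_subset_of_subset
  · rintro ℒ ⟨hrec, h, hcomp, hlearn⟩
    exact ⟨hrec, psd_to_g h hcomp hlearn⟩
  · rintro ℒ ⟨hrec, h, hcomp, hlearn⟩
    exact ⟨hrec, g_to_psd h hcomp hlearn⟩

end InductiveInference
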